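/- Let X, Y be complex Banach spaces, A ∈ B(X), B ∈ B(Y). If A is quasi-nilpotent but not nilpotent and B is not nilpotent, then the multiplication operator τ_{AB}(U) = AUB on B(Y,X) is quasi-nilpotent but not nilpotent. -/

import Mathlib

open Filter ENNReal Topology

theorem tau_quasinilpotent_not_nilpotent
    {X Y : Type*} [NormedAddCommGroup X] [NormedSpace ℂ X] [CompleteSpace X]
    [NormedAddCommGroup Y] [NormedSpace ℂ Y] [CompleteSpace Y]
    (A : X →L[ℂ] X) (B : Y →L[ℂ] Y)
    (T : (Y →L[ℂ] X) →L[ℂ] (Y →L[ℂ] X))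
    (hT : ∀ U : Y →L[ℂ] X, T U = A.comp (U.comp B))
    (hAq : spectrum ℂ A = {0}) (hA : ¬ IsNilpotent A) (hB : ¬ IsNilpotent B) :
    spectrum ℂ T = {0} ∧ ¬ IsNilpotent T := by
  -- powers of T
  have hTn : ∀ (n : ℕ) (U : Y →L[ℂ] X), (T ^ n) U = (A ^ n).comp (U.comp (B ^ n)) := by
    intro n
    induction n with
    | zero => intro U; ext y; simp
    | succ n ih =>
      intro U
      have h1 : (T ^ (n + 1)) U = T ((T ^ n) U) := by rw [pow_succ']; rfl
      rw [h1, ih, hT]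
      ext y
      show A ((A ^ n) (U ((B ^ n) (B y)))) = (A ^ (n+1)) (U ((B ^ (n+1)) y))
      rw [pow_succ', pow_succ]
      rfl
  -- nontriviality of X and Y
  have hA1 : A ≠ 0 := fun h => hA ⟨1, by simp [h]⟩
  have hB1 : B ≠ 0 := fun h => hB ⟨1, by simp [h]⟩
  have hXnt : Nontrivial X := by
    by_contra h
    rw [not_nontrivial_iff_subsingleton] at h
    exact hA1 (by ext x; exact Subsingleton.elim _ _)
  have hYnt : Nontrivial Y := by
    by_contra h
    rw [not_nontrivial_iff_subsingleton] at h
    exact hB1 (by ext y; exact Subsingleton.elim _ _)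
  -- not nilpotent
  have hTnil : ¬ IsNilpotent T := by
    rintro ⟨n, hn⟩
    have hAn : (A : X →L[ℂ] X) ^ n ≠ 0 := fun h => hA ⟨n, h⟩
    have hBn : (B : Y →L[ℂ] Y) ^ n ≠ 0 := fun h => hB ⟨n, h⟩
    obtain ⟨x, hx⟩ : ∃ x, (A ^ n) x ≠ 0 := by
      by_contra h; push_neg at h
      exact hAn (by ext x; simpa using h x)
    obtain ⟨y, hy⟩ : ∃ y, (B ^ n) y ≠ 0 := by
      by_contra h; push_neg at h
      exact hBn (by ext y; simpa using h y)
    obtain ⟨g, hg1, hg2⟩ := exists_dual_vector ℂ ((B ^ n) y) (norm_ne_zero_iff.mpr hy)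
    set U : Y →L[ℂ] X := g.smulRight x with hU
    have h0 : (T ^ n) U y = 0 := by rw [hn]; simp
    rw [hTn n U] at h0
    simp only [ContinuousLinearMap.comp_apply, hU, ContinuousLinearMap.smulRight_apply] at h0
    rw [hg2, map_smul] at h0
    have hBny : (‖(B ^ n) y‖ : ℂ) ≠ 0 := by
      simpa using norm_ne_zero_iff.mpr hy
    rcases smul_eq_zero.mp h0 with h | h
    · exact hBny h
    · exact hx h
  refine ⟨?_, hTnil⟩
  -- spectral radius of T is 0
  have hrA : spectralRadius ℂ A = 0 := by
    simp [spectralRadius, hAq]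
  have hlim : Tendsto (fun n : ℕ => (‖A ^ n‖₊ : ℝ≥0∞) ^ (1 / n : ℝ)) atTop (𝓝 0) := by
    simpa [hrA] using spectrum.pow_nnnorm_pow_one_div_tendsto_nhds_spectralRadius A
  have hnorm : ∀ n : ℕ, ‖T ^ n‖₊ ≤ ‖A ^ n‖₊ * ‖B‖₊ ^ n := by
    intro n
    refine ContinuousLinearMap.opNNNorm_le_bound _ _ fun U => ?_
    rw [hTn n U]
    calc ‖(A ^ n).comp (U.comp (B ^ n))‖₊ ≤ ‖A ^ n‖₊ * (‖U‖₊ * ‖B ^ n‖₊) :=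
          (ContinuousLinearMap.opNNNorm_comp_le _ _).trans
            (by gcongr; exact ContinuousLinearMap.opNNNorm_comp_le _ _)
      _ ≤ ‖A ^ n‖₊ * (‖U‖₊ * ‖B‖₊ ^ n) := by gcongr; exact nnnorm_pow_le _ _
      _ = ‖A ^ n‖₊ * ‖B‖₊ ^ n * ‖U‖₊ := by ring
  -- bound the liminf
  have hrT : spectralRadius ℂ T = 0 := by
    refine le_antisymm ?_ zero_le
    refine (spectrum.spectralRadius_le_liminf_pow_nnnorm_pow_one_div ℂ T).trans ?_
    have hlim2 : Tendsto (fun n : ℕ => (‖A ^ n‖₊ : ℝ≥0∞) ^ (1 / n : ℝ) * ‖B‖₊)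
        atTop (𝓝 0) := by
      simpa using ENNReal.Tendsto.mul_const hlim (Or.inr coe_ne_top)
    have hle : ∀ᶠ n : ℕ in atTop, (‖T ^ n‖₊ : ℝ≥0∞) ^ (1 / n : ℝ) ≤
        (‖A ^ n‖₊ : ℝ≥0∞) ^ (1 / n : ℝ) * ‖B‖₊ := by
      filter_upwards [eventually_ge_atTop 1] with n hn
      have h1 : (‖T ^ n‖₊ : ℝ≥0∞) ≤ (‖A ^ n‖₊ : ℝ≥0∞) * (‖B‖₊ : ℝ≥0∞) ^ n := by
        exact_mod_cast hnorm n
      calc (‖T ^ n‖₊ : ℝ≥0∞) ^ (1 / n : ℝ)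
          ≤ ((‖A ^ n‖₊ : ℝ≥0∞) * (‖B‖₊ : ℝ≥0∞) ^ n) ^ (1 / n : ℝ) := by
            exact ENNReal.rpow_le_rpow h1 (by positivity)
        _ = (‖A ^ n‖₊ : ℝ≥0∞) ^ (1 / n : ℝ) * ((‖B‖₊ : ℝ≥0∞) ^ n) ^ (1 / n : ℝ) := by
            rw [ENNReal.mul_rpow_of_nonneg _ _ (by positivity)]
        _ = (‖A ^ n‖₊ : ℝ≥0∞) ^ (1 / n : ℝ) * ‖B‖₊ := by
            rw [← ENNReal.rpow_natCast, ← ENNReal.rpow_mul]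
            congr 1
            rw [mul_one_div, div_self (Nat.cast_ne_zero.mpr (by omega)), ENNReal.rpow_one]
    calc atTop.liminf (fun n : ℕ => (‖T ^ n‖₊ : ℝ≥0∞) ^ (1 / n : ℝ))
        ≤ atTop.liminf (fun n : ℕ => (‖A ^ n‖₊ : ℝ≥0∞) ^ (1 / n : ℝ) * ‖B‖₊) :=
          liminf_le_liminf hle
      _ = 0 := hlim2.liminf_eq
  -- conclude spectrum = {0}
  have hsub : spectrum ℂ T ⊆ {0} := by
    intro z hz
    have : (‖z‖₊ : ℝ≥0∞) ≤ spectralRadius ℂ T := le_iSup₂ (α := ℝ≥0∞) z hz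
    rw [hrT, le_zero_iff] at this
    simp only [Set.mem_singleton_iff]
    have : ‖z‖₊ = 0 := by exact_mod_cast this
    simpa using this
  have hUnt : Nontrivial (Y →L[ℂ] X) := by
    obtain ⟨x, hx⟩ := exists_ne (0 : X)
    obtain ⟨y, hy⟩ := exists_ne (0 : Y)
    obtain ⟨g, hg1, hg2⟩ := exists_dual_vector ℂ y (norm_ne_zero_iff.mpr hy)
    refine nontrivial_of_ne (g.smulRight x) 0 fun h => ?_
    have : (g.smulRight x) y = 0 := by rw [h]; rfl
    rw [ContinuousLinearMap.smulRight_apply, hg2, smul_eq_zero] at this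
    rcases this with h' | h'
    · exact hy (by simpa [norm_eq_zero] using h')
    · exact hx h'
  have hne : (spectrum ℂ T).Nonempty := spectrum.nonempty T
  exact Set.eq_singleton_iff_nonempty_unique_mem.mpr ⟨hne, fun z hz => hsub hz⟩
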